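/- Lemma (trade-off from uncertainty): Under the full hypotheses of Lemma 5 in the paper — $Q$ projection on $K$, $0 \le P$ with $P^2\le P$ on $K'$, $\mathcal{L}(\cdot) = \mathrm{tr}_{R'}[V(\cdot\otimes\rho_R)V^\dagger]$, $Z = V^\dagger(X_{K'}+X_{R'})V-(X_K+X_R)$, $W_K = \mathrm{tr}_R(\rho_R Z)$, and $\langle\mathcal{L}^\dagger(P)\rangle_{(1-Q)\rho(1-Q)} + \langle 1-\mathcal{L}^\dagger(P)\rangle_{Q\rho Q} = \varepsilon^2$ — the inequality $|\mathrm{tr}(\rho[Q, Y_K+W_K])| \le \varepsilon(\Delta' + \sqrt{\mathcal{F}})$ holds, where $Y_K = X_K - \mathcal{L}^\dagger(X_{K'})$, $\mathcal{F} = \mathcal{F}_{\rho_R}(X_R)$, $\Delta' = \sqrt{\mathcal{F}_{\rho\otimes\rho_R}(X_K - V^\dagger X_{K'}V)} + \sqrt{\mathcal{F}_{\rho\otimes\rho_R}(Z)}$. -/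

import Mathlib

open Matrix
open scoped Kronecker ComplexOrder

variable {n m : Type*} [Fintype n] [DecidableEq n] [Fintype m] [DecidableEq m]

open Classical in
/-- square root of a matrix (zero if not PSD) -/
noncomputable def msqrt (A : Matrix n n ℂ) : Matrix n n ℂ :=
  if h : A.PosSemidef then
    (h.1.eigenvectorUnitary : Matrix n n ℂ) *
      diagonal (fun i => ((Real.sqrt (h.1.eigenvalues i) : ℝ) : ℂ)) *
      (star (h.1.eigenvectorUnitary : Matrix n n ℂ))
  else 0

/-- trace norm -/
noncomputable def traceNorm (X : Matrix n m ℂ) : ℝ :=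
  ((msqrt (Xᴴ * X)).trace).re

def IsDensity (ρ : Matrix n n ℂ) : Prop := ρ.PosSemidef ∧ ρ.trace = 1

noncomputable def variance (σ A : Matrix n n ℂ) : ℝ :=
  (Matrix.trace (σ * (A * A))).re - ((Matrix.trace (σ * A)).re) ^ 2

/-- `L` is a symmetric logarithmic derivative for `(σ, W)`. -/
def IsSLD (σ W L : Matrix n n ℂ) : Prop :=
  L.IsHermitian ∧ L * σ + σ * L = ((-2 : ℂ) * Complex.I) • (W * σ - σ * W)

/-- SLD Fisher information value associated with a given SLD `L`. -/
noncomputable def fisherVal (σ L : Matrix n n ℂ) : ℝ :=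
  (Matrix.trace (σ * (L * L))).re

noncomputable def fidelity (ρ σ : Matrix n n ℂ) : ℝ :=
  ((msqrt (msqrt ρ * σ * msqrt ρ)).trace).re

noncomputable def purifiedDist (ρ σ : Matrix n n ℂ) : ℝ :=
  Real.sqrt (1 - fidelity ρ σ ^ 2)

/-- completely positive -/
def IsCompletelyPositive (Φ : Matrix n n ℂ →ₗ[ℂ] Matrix m m ℂ) : Prop :=
  ∀ (k : ℕ) (M : Matrix (Fin k × n) (Fin k × n) ℂ), M.PosSemidef →
    (Matrix.of fun (p q : Fin k × m) => (Φ (Matrix.of fun i j => M (p.1, i) (q.1, j))) p.2 q.2).PosSemidef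

def IsCPTP (Φ : Matrix n n ℂ →ₗ[ℂ] Matrix m m ℂ) : Prop :=
  IsCompletelyPositive Φ ∧ ∀ X, (Φ X).trace = X.trace

/-- partial trace over the second factor -/
noncomputable def ptraceR {k r : Type*} [Fintype k] [Fintype r]
    (M : Matrix (k × r) (k × r) ℂ) : Matrix k k ℂ :=
  Matrix.of fun i j => ∑ a : r, M (i, a) (j, a)



section TradeoffHelpers

variable {n' : Type*} [Fintype n'] [DecidableEq n'] {m' : Type*} [Fintype m'] [DecidableEq m']

open scoped MatrixOrder

noncomputable def Matrix.PosSemidef.sqrt {σ : Matrix n' n' ℂ} (_hσ : σ.PosSemidef) :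
    Matrix n' n' ℂ := CFC.sqrt σ

lemma Matrix.PosSemidef.sqrt_mul_self {σ : Matrix n' n' ℂ} (hσ : σ.PosSemidef) :
    hσ.sqrt * hσ.sqrt = σ := CFC.sqrt_mul_sqrt_self σ hσ.nonneg

lemma Matrix.PosSemidef.posSemidef_sqrt {σ : Matrix n' n' ℂ} (hσ : σ.PosSemidef) :
    hσ.sqrt.PosSemidef := (CFC.sqrt_nonneg σ).posSemidef

noncomputable def toEuc {n' : Type*} [Fintype n'] (A : Matrix n' n' ℂ) :
    EuclideanSpace ℂ (n' × n') := WithLp.toLp 2 (fun p : n' × n' => A p.1 p.2)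

lemma inner_toEuc (A B : Matrix n' n' ℂ) :
    (inner ℂ (toEuc A) (toEuc B) : ℂ) = Matrix.trace (Aᴴ * B) := by
  simp only [toEuc, PiLp.inner_apply, PiLp.toLp_apply, RCLike.inner_apply', Matrix.trace, Matrix.diag,
    Matrix.mul_apply, Matrix.conjTranspose_apply, starRingEnd_apply]
  rw [Fintype.sum_prod_type]
  exact Finset.sum_comm

lemma norm_toEuc (A : Matrix n' n' ℂ) :
    ‖toEuc A‖ = Real.sqrt ((Matrix.trace (Aᴴ * A)).re) := by
  have h : (Matrix.trace (Aᴴ * A)).re = ‖toEuc A‖ ^ 2 := by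
    rw [← inner_toEuc]
    exact_mod_cast (inner_self_eq_norm_sq (𝕜 := ℂ) (toEuc A))
  rw [h, Real.sqrt_sq (norm_nonneg _)]

lemma frob_cs (A B : Matrix n' n' ℂ) :
    ‖(Matrix.trace (Aᴴ * B))‖ ≤
      Real.sqrt ((Matrix.trace (Aᴴ * A)).re) * Real.sqrt ((Matrix.trace (Bᴴ * B)).re) := by
  rw [← inner_toEuc, ← norm_toEuc, ← norm_toEuc]
  exact norm_inner_le_norm _ _

lemma sandwich_trace {σ : Matrix n' n' ℂ} (hσ : σ.PosSemidef) (A B : Matrix n' n' ℂ) :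
    Matrix.trace (hσ.sqrt * A * (B * hσ.sqrt)) = Matrix.trace (σ * (A * B)) := by
  rw [show hσ.sqrt * A * (B * hσ.sqrt) = hσ.sqrt * (A * B * hσ.sqrt) by noncomm_ring,
    trace_mul_comm, mul_assoc, show hσ.sqrt * hσ.sqrt = σ from hσ.sqrt_mul_self,
    trace_mul_comm]

lemma sqrt_fisher_eq {σ : Matrix n' n' ℂ} (hσ : σ.PosSemidef) (L : Matrix n' n' ℂ)
    (hL : L.IsHermitian) :
    Real.sqrt (fisherVal σ L) = ‖toEuc (L * hσ.sqrt)‖ := by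
  rw [norm_toEuc]
  congr 1
  have hs : hσ.sqrt.IsHermitian := hσ.posSemidef_sqrt.1
  rw [conjTranspose_mul, hs.eq, hL.eq, sandwich_trace hσ]; rfl

lemma second_moment_eq {σ : Matrix n' n' ℂ} (hσ : σ.PosSemidef) (B : Matrix n' n' ℂ)
    (hB : B.IsHermitian) :
    (Matrix.trace (σ * (B * B))).re = ‖toEuc (B * hσ.sqrt)‖ ^ 2 := by
  have hs : hσ.sqrt.IsHermitian := hσ.posSemidef_sqrt.1
  have h : (Matrix.trace ((B * hσ.sqrt)ᴴ * (B * hσ.sqrt))).re = ‖toEuc (B * hσ.sqrt)‖ ^ 2 := by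
    rw [← inner_toEuc]
    exact_mod_cast (inner_self_eq_norm_sq (𝕜 := ℂ) (toEuc (B * hσ.sqrt)))
  rw [← h]
  congr 1
  rw [conjTranspose_mul, hs.eq, hB.eq, sandwich_trace hσ]

lemma sqrt_second_moment {σ : Matrix n' n' ℂ} (hσ : σ.PosSemidef) (B : Matrix n' n' ℂ)
    (hB : B.IsHermitian) :
    Real.sqrt ((Matrix.trace (σ * (B * B))).re) = ‖toEuc (B * hσ.sqrt)‖ := by
  rw [second_moment_eq hσ B hB, Real.sqrt_sq (norm_nonneg _)]

lemma ur {σ : Matrix n' n' ℂ} (hσ : σ.PosSemidef) {W L : Matrix n' n' ℂ} (hL : IsSLD σ W L)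
    {B : Matrix n' n' ℂ} (hB : B.IsHermitian) :
    ‖(Matrix.trace (σ * (W * B - B * W)))‖ ≤
      Real.sqrt (fisherVal σ L) * Real.sqrt ((Matrix.trace (σ * (B * B))).re) := by
  have hs : hσ.sqrt.IsHermitian := hσ.posSemidef_sqrt.1
  have hcomm : σ * W - W * σ = (-(Complex.I / 2)) • (L * σ + σ * L) := by
    rw [hL.2, smul_smul,
      show -(Complex.I / 2) * ((-2 : ℂ) * Complex.I) = -1 by
        linear_combination (1 : ℂ) * Complex.I_mul_I,
      neg_one_smul, neg_sub]
  have e1 : Matrix.trace (σ * (W * B - B * W)) = Matrix.trace (B * (σ * W - W * σ)) := by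
    rw [mul_sub, mul_sub, trace_sub, trace_sub]
    congr 1
    · rw [← mul_assoc, trace_mul_comm (σ * W) B]
    · rw [trace_mul_comm σ (B * W), mul_assoc]
  have e2 : Matrix.trace (σ * (W * B - B * W)) =
      (-(Complex.I / 2)) * (Matrix.trace ((B * hσ.sqrt)ᴴ * (L * hσ.sqrt)) +
        Matrix.trace ((L * hσ.sqrt)ᴴ * (B * hσ.sqrt))) := by
    rw [e1, hcomm, Matrix.mul_smul, trace_smul, smul_eq_mul]
    congr 1
    rw [conjTranspose_mul, conjTranspose_mul, hs.eq, hB.eq, hL.1.eq,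
      sandwich_trace hσ, sandwich_trace hσ, mul_add, trace_add]
    congr 1
    · rw [← mul_assoc, trace_mul_comm (B * L) σ]
    · rw [← mul_assoc, trace_mul_comm (B * σ) L, ← mul_assoc, trace_mul_comm (L * B) σ]
  rw [e2, sqrt_fisher_eq hσ L hL.1, sqrt_second_moment hσ B hB]
  rw [norm_mul]
  have hI : ‖(-(Complex.I / 2))‖ = 1 / 2 := by
    simp
  rw [hI]
  have c1 := frob_cs (B * hσ.sqrt) (L * hσ.sqrt)
  have c2 := frob_cs (L * hσ.sqrt) (B * hσ.sqrt)
  rw [← norm_toEuc, ← norm_toEuc] at c1 c2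
  calc 1 / 2 * ‖(Matrix.trace ((B * hσ.sqrt)ᴴ * (L * hσ.sqrt)) +
        Matrix.trace ((L * hσ.sqrt)ᴴ * (B * hσ.sqrt)))‖
      ≤ 1 / 2 * (‖(Matrix.trace ((B * hσ.sqrt)ᴴ * (L * hσ.sqrt)))‖ +
        ‖(Matrix.trace ((L * hσ.sqrt)ᴴ * (B * hσ.sqrt)))‖) := by
        gcongr; exact norm_add_le _ _
    _ ≤ 1 / 2 * (‖toEuc (B * hσ.sqrt)‖ * ‖toEuc (L * hσ.sqrt)‖ +
        ‖toEuc (L * hσ.sqrt)‖ * ‖toEuc (B * hσ.sqrt)‖) := by gcongr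
    _ = ‖toEuc (L * hσ.sqrt)‖ * ‖toEuc (B * hσ.sqrt)‖ := by ring

lemma kron_conjT (A : Matrix n' n' ℂ) (B : Matrix m' m' ℂ) : (A ⊗ₖ B)ᴴ = Aᴴ ⊗ₖ Bᴴ := by
  ext ⟨i, a⟩ ⟨j, b⟩
  simp [conjTranspose_apply, Matrix.kroneckerMap_apply, star_mul']

lemma sub_kron (A B : Matrix n' n' ℂ) (C : Matrix m' m' ℂ) :
    (A - B) ⊗ₖ C = A ⊗ₖ C - B ⊗ₖ C := by
  ext ⟨i, a⟩ ⟨j, b⟩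
  simp [Matrix.kroneckerMap_apply, sub_mul]

lemma kron_sub (A : Matrix n' n' ℂ) (B C : Matrix m' m' ℂ) :
    A ⊗ₖ (B - C) = A ⊗ₖ B - A ⊗ₖ C := by
  ext ⟨i, a⟩ ⟨j, b⟩
  simp [Matrix.kroneckerMap_apply, mul_sub]

lemma kron_add (A : Matrix n' n' ℂ) (B C : Matrix m' m' ℂ) :
    A ⊗ₖ (B + C) = A ⊗ₖ B + A ⊗ₖ C := by
  ext ⟨i, a⟩ ⟨j, b⟩
  simp [Matrix.kroneckerMap_apply, mul_add]

lemma kron_smul (c : ℂ) (A : Matrix n' n' ℂ) (B : Matrix m' m' ℂ) :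
    A ⊗ₖ (c • B) = c • (A ⊗ₖ B) := by
  ext ⟨i, a⟩ ⟨j, b⟩
  simp [Matrix.kroneckerMap_apply]
  ring

lemma posSemidef_kron {A : Matrix n' n' ℂ} {B : Matrix m' m' ℂ}
    (hA : A.PosSemidef) (hB : B.PosSemidef) : (A ⊗ₖ B).PosSemidef := by
  obtain ⟨A', hA'⟩ := CStarAlgebra.nonneg_iff_eq_star_mul_self.mp hA.nonneg
  obtain ⟨B', hB'⟩ := CStarAlgebra.nonneg_iff_eq_star_mul_self.mp hB.nonneg
  rw [star_eq_conjTranspose] at hA' hB'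
  have h : A ⊗ₖ B = (A' ⊗ₖ B')ᴴ * (A' ⊗ₖ B') := by
    rw [kron_conjT, ← Matrix.mul_kronecker_mul, ← hA', ← hB']
  rw [h]
  exact Matrix.posSemidef_conjTranspose_mul_self _

lemma trace_sq_sq (a b : Matrix n' n' ℂ) (ha : aᴴ = a) (hb : bᴴ = b) :
    Matrix.trace ((a * a) * (b * b)) = Matrix.trace ((b * a)ᴴ * (b * a)) := by
  rw [conjTranspose_mul, ha, hb,
    show a * b * (b * a) = a * (b * (b * a)) from by noncomm_ring,
    trace_mul_comm a (b * (b * a)),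
    show b * (b * a) * a = b * b * (a * a) from by noncomm_ring,
    trace_mul_comm (b * b) (a * a)]

lemma re_trace_mul_nonneg {A B : Matrix n' n' ℂ} (hA : A.PosSemidef) (hB : B.PosSemidef) :
    0 ≤ (Matrix.trace (A * B)).re := by
  have h2 : Matrix.trace (A * B) =
      Matrix.trace ((hB.sqrt * hA.sqrt)ᴴ * (hB.sqrt * hA.sqrt)) := by
    conv_lhs => rw [← hA.sqrt_mul_self, ← hB.sqrt_mul_self]
    exact trace_sq_sq _ _ hA.posSemidef_sqrt.1.eq hB.posSemidef_sqrt.1.eq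
  rw [h2]
  set X := hB.sqrt * hA.sqrt
  have h3 : Matrix.trace (Xᴴ * X) = ∑ p : n' × n', (starRingEnd ℂ) (X p.1 p.2) * X p.1 p.2 := by
    simp only [Matrix.trace, Matrix.diag, Matrix.mul_apply, Matrix.conjTranspose_apply,
      starRingEnd_apply]
    rw [Fintype.sum_prod_type]
    exact Finset.sum_comm
  rw [h3]
  rw [Complex.re_sum]
  apply Finset.sum_nonneg
  intro p _
  rw [mul_comm, Complex.mul_conj]
  simp [Complex.normSq_nonneg]

lemma trace_mul_ptraceR {k r : Type*} [Fintype k] [DecidableEq k] [Fintype r] [DecidableEq r]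
    (A : Matrix k k ℂ) (B : Matrix r r ℂ) (M : Matrix (k × r) (k × r) ℂ) :
    Matrix.trace (A * ptraceR (((1 : Matrix k k ℂ) ⊗ₖ B) * M)) =
      Matrix.trace ((A ⊗ₖ B) * M) := by
  simp only [Matrix.trace, Matrix.diag, Matrix.mul_apply, ptraceR, Matrix.of_apply,
    Matrix.kroneckerMap_apply, Fintype.sum_prod_type, Matrix.one_apply, ite_mul, one_mul,
    zero_mul, mul_ite, mul_zero, Finset.sum_ite_eq, Finset.mem_univ, if_true, Finset.mul_sum,
    Finset.sum_mul]
  refine Finset.sum_congr rfl fun i _ => ?_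
  rw [Finset.sum_comm]
  refine Finset.sum_congr rfl fun a _ => ?_
  refine Finset.sum_congr rfl fun j _ => ?_
  rw [Finset.sum_comm]
  simp only [Finset.sum_ite_eq, Finset.mem_univ, if_true]
  refine Finset.sum_congr rfl fun b _ => ?_
  ring

lemma conj_sandwich {a b : Type*} [Fintype a] [DecidableEq a] [Fintype b] (V : Matrix a b ℂ)
    (hV2 : V * Vᴴ = 1) (X Y : Matrix a a ℂ) :
    (Vᴴ * X * V) * (Vᴴ * Y * V) = Vᴴ * (X * Y) * V := by
  rw [Matrix.mul_assoc (Vᴴ * X) V (Vᴴ * Y * V), ← Matrix.mul_assoc V (Vᴴ * Y) V,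
    ← Matrix.mul_assoc V Vᴴ Y, hV2, Matrix.one_mul, ← Matrix.mul_assoc (Vᴴ * X) Y V,
    Matrix.mul_assoc Vᴴ X Y]

lemma tr_conj {a b : Type*} [Fintype a] [Fintype b] (V : Matrix a b ℂ)
    (G : Matrix a a ℂ) (S : Matrix b b ℂ) :
    Matrix.trace (G * (V * S * Vᴴ)) = Matrix.trace ((Vᴴ * G * V) * S) := by
  rw [trace_mul_comm G (V * S * Vᴴ), Matrix.mul_assoc (V * S) Vᴴ G,
    trace_mul_comm (V * S) (Vᴴ * G), ← Matrix.mul_assoc (Vᴴ * G) V S]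

lemma ptraceR_kron {k r : Type*} [Fintype k] [Fintype r]
    (A : Matrix k k ℂ) (B : Matrix r r ℂ) :
    ptraceR (A ⊗ₖ B) = B.trace • A := by
  ext i j
  simp only [ptraceR, Matrix.of_apply, Matrix.kroneckerMap_apply, Matrix.trace, Matrix.diag,
    Matrix.smul_apply, smul_eq_mul, mul_comm]
  rw [Finset.mul_sum]

lemma ptraceR_add {k r : Type*} [Fintype k] [Fintype r]
    (M N : Matrix (k × r) (k × r) ℂ) : ptraceR (M + N) = ptraceR M + ptraceR N := by
  ext i j
  simp [ptraceR, Finset.sum_add_distrib]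

lemma ptraceR_sub {k r : Type*} [Fintype k] [Fintype r]
    (M N : Matrix (k × r) (k × r) ℂ) : ptraceR (M - N) = ptraceR M - ptraceR N := by
  ext i j
  simp [ptraceR, Finset.sum_sub_distrib]


lemma trace_identity (σ Q' N : Matrix n' n' ℂ) (hQ'2 : Q' * Q' = Q') :
    Matrix.trace (N * ((1 - Q') * (σ * (1 - Q')))) +
      (Matrix.trace (Q' * (σ * Q')) - Matrix.trace (N * (Q' * (σ * Q')))) =
    Matrix.trace (σ * ((Q' - N) * (Q' - N))) + Matrix.trace (σ * (N - N * N)) := by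
  have hDexp : (Q' - N) * (Q' - N) = Q' - Q' * N - N * Q' + N * N := by
    rw [Matrix.sub_mul, Matrix.mul_sub, Matrix.mul_sub, hQ'2]
    abel
  rw [hDexp]
  simp only [Matrix.mul_sub, Matrix.sub_mul, Matrix.mul_add, Matrix.add_mul,
    Matrix.mul_one, Matrix.one_mul, trace_sub, trace_add]
  have c1 : Matrix.trace (N * σ) = Matrix.trace (σ * N) := trace_mul_comm _ _
  have c2 : Matrix.trace (N * (σ * Q')) = Matrix.trace (σ * (Q' * N)) := by
    rw [← Matrix.mul_assoc, trace_mul_comm (N * σ) Q', ← Matrix.mul_assoc,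
      trace_mul_comm (Q' * N) σ]
  have c3 : Matrix.trace (N * (Q' * σ)) = Matrix.trace (σ * (N * Q')) := by
    rw [← Matrix.mul_assoc, trace_mul_comm (N * Q') σ]
  have c5 : Matrix.trace (Q' * (σ * Q')) = Matrix.trace (σ * Q') := by
    rw [← Matrix.mul_assoc, trace_mul_comm (Q' * σ) Q', ← Matrix.mul_assoc, hQ'2,
      trace_mul_comm Q' σ]
  linear_combination c1 - c3 - c2 + c5

end TradeoffHelpers

/-- Key trade-off lemma: commutator expectation bounded by ε times Fisher terms. -/
theorem tradeoff_from_uncertainty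
    {k r k' r' : Type*} [Fintype k] [DecidableEq k] [Fintype r] [DecidableEq r]
    [Fintype k'] [DecidableEq k'] [Fintype r'] [DecidableEq r']
    (V : Matrix (k' × r') (k × r) ℂ) (hV1 : Vᴴ * V = 1) (hV2 : V * Vᴴ = 1)
    (Q : Matrix k k ℂ) (hQh : Q.IsHermitian) (hQp : Q * Q = Q)
    (P : Matrix k' k' ℂ) (hP : P.PosSemidef) (hP2 : (P - P * P).PosSemidef)
    (ρ : Matrix k k ℂ) (hρ : IsDensity ρ) (ρR : Matrix r r ℂ) (hρR : IsDensity ρR)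
    (XK : Matrix k k ℂ) (hXK : XK.IsHermitian) (XR : Matrix r r ℂ) (hXR : XR.IsHermitian)
    (XK' : Matrix k' k' ℂ) (hXK' : XK'.IsHermitian)
    (XR' : Matrix r' r' ℂ) (hXR' : XR'.IsHermitian)
    (Z : Matrix (k × r) (k × r) ℂ)
    (hZ : Z = Vᴴ * (XK' ⊗ₖ (1 : Matrix r' r' ℂ) + (1 : Matrix k' k' ℂ) ⊗ₖ XR') * V -
      (XK ⊗ₖ (1 : Matrix r r ℂ) + (1 : Matrix k k ℂ) ⊗ₖ XR))
    (LR : Matrix r r ℂ) (hLR : IsSLD ρR XR LR)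
    (L1 : Matrix (k × r) (k × r) ℂ)
    (hL1 : IsSLD (ρ ⊗ₖ ρR)
      (XK ⊗ₖ (1 : Matrix r r ℂ) - Vᴴ * (XK' ⊗ₖ (1 : Matrix r' r' ℂ)) * V) L1)
    (LZ : Matrix (k × r) (k × r) ℂ) (hLZ : IsSLD (ρ ⊗ₖ ρR) Z LZ)
    (ε : ℝ) (hεpos : 0 ≤ ε)
    (hε : (Matrix.trace ((P ⊗ₖ (1 : Matrix r' r' ℂ)) *
            (V * ((((1 - Q) * ρ * (1 - Q)) ⊗ₖ ρR)) * Vᴴ))).re +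
          (Matrix.trace (((1 : Matrix (k' × r') (k' × r') ℂ) - P ⊗ₖ (1 : Matrix r' r' ℂ)) *
            (V * (((Q * ρ * Q) ⊗ₖ ρR)) * Vᴴ))).re = ε ^ 2) :
    ‖(Matrix.trace (ρ *
        (Q * ((XK - ptraceR (((1 : Matrix k k ℂ) ⊗ₖ ρR) *
                (Vᴴ * (XK' ⊗ₖ (1 : Matrix r' r' ℂ)) * V))) +
              ptraceR (((1 : Matrix k k ℂ) ⊗ₖ ρR) * Z)) -
         ((XK - ptraceR (((1 : Matrix k k ℂ) ⊗ₖ ρR) *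
                (Vᴴ * (XK' ⊗ₖ (1 : Matrix r' r' ℂ)) * V))) +
              ptraceR (((1 : Matrix k k ℂ) ⊗ₖ ρR) * Z)) * Q)))‖ ≤
      ε * ((Real.sqrt (fisherVal (ρ ⊗ₖ ρR) L1) + Real.sqrt (fisherVal (ρ ⊗ₖ ρR) LZ)) +
        Real.sqrt (fisherVal ρR LR)) := by
  classical
  obtain ⟨hρP, hρ1⟩ := hρ
  obtain ⟨hρRP, hρR1⟩ := hρR
  have hσ : (ρ ⊗ₖ ρR).PosSemidef := posSemidef_kron hρP hρRP
  set G : Matrix (k' × r') (k' × r') ℂ := P ⊗ₖ (1 : Matrix r' r' ℂ) with hGdef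
  set Q' : Matrix (k × r) (k × r) ℂ := Q ⊗ₖ (1 : Matrix r r ℂ) with hQ'def
  set N : Matrix (k × r) (k × r) ℂ := Vᴴ * G * V with hNdef
  set D : Matrix (k × r) (k × r) ℂ := Q' - N with hDdef
  set XRl : Matrix (k × r) (k × r) ℂ := (1 : Matrix k k ℂ) ⊗ₖ XR with hXRldef
  set W1 : Matrix (k × r) (k × r) ℂ :=
    XK ⊗ₖ (1 : Matrix r r ℂ) - Vᴴ * (XK' ⊗ₖ (1 : Matrix r' r' ℂ)) * V with hW1def
  set Am : Matrix (k × r) (k × r) ℂ := Vᴴ * ((1 : Matrix k' k' ℂ) ⊗ₖ XR') * V with hAmdef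
  set H : Matrix (k × r) (k × r) ℂ := W1 + Z with hHdef
  -- basic algebraic facts
  have hQ'2 : Q' * Q' = Q' := by
    rw [hQ'def, ← Matrix.mul_kronecker_mul, hQp, Matrix.one_mul]
  have hQ'h : Q'ᴴ = Q' := by
    rw [hQ'def, kron_conjT, hQh.eq, Matrix.conjTranspose_one]
  have hGh : Gᴴ = G := by
    rw [hGdef, kron_conjT, hP.1.eq, Matrix.conjTranspose_one]
  have hNh : Nᴴ = N := by
    rw [hNdef, Matrix.conjTranspose_mul, Matrix.conjTranspose_mul,
      Matrix.conjTranspose_conjTranspose, hGh, ← Matrix.mul_assoc]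
  have hDh : D.IsHermitian := by
    show Dᴴ = D
    rw [hDdef, Matrix.conjTranspose_sub, hQ'h, hNh]
  have hHe2 : H = Am - XRl := by
    rw [hHdef, hW1def, hAmdef, hXRldef, hZ, Matrix.mul_add, Matrix.add_mul]
    abel
  have hNAm : N * Am = Am * N := by
    rw [hNdef, hAmdef, conj_sandwich V hV2, conj_sandwich V hV2, hGdef,
      ← Matrix.mul_kronecker_mul, ← Matrix.mul_kronecker_mul]
    simp [Matrix.mul_one, Matrix.one_mul]
  have hQX : Q' * XRl = XRl * Q' := by
    rw [hQ'def, hXRldef, ← Matrix.mul_kronecker_mul, ← Matrix.mul_kronecker_mul]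
    simp [Matrix.mul_one, Matrix.one_mul]
  have key : Q' * H - H * Q' = (D * H - H * D) + (D * XRl - XRl * D) := by
    have k1 : Q' * H - H * Q' = (D * H - H * D) + (N * H - H * N) := by
      rw [hDdef]; noncomm_ring
    have k2 : N * H - H * N = XRl * N - N * XRl := by
      rw [hHe2, Matrix.mul_sub, Matrix.sub_mul, hNAm]; abel
    have k3 : XRl * N - N * XRl = D * XRl - XRl * D := by
      rw [hDdef, Matrix.sub_mul, Matrix.mul_sub, hQX]; abel
    rw [k1, k2, k3]
  -- rewrite the goal's trace
  have hE : XK - ptraceR (((1 : Matrix k k ℂ) ⊗ₖ ρR) *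
        (Vᴴ * (XK' ⊗ₖ (1 : Matrix r' r' ℂ)) * V)) +
        ptraceR (((1 : Matrix k k ℂ) ⊗ₖ ρR) * Z) =
      ptraceR (((1 : Matrix k k ℂ) ⊗ₖ ρR) * H) := by
    rw [hHdef, hW1def, Matrix.mul_add, Matrix.mul_sub, ptraceR_add, ptraceR_sub]
    congr 2
    rw [← Matrix.mul_kronecker_mul, Matrix.one_mul, Matrix.mul_one, ptraceR_kron, hρR1,
      one_smul]
  have hσQ' : (ρ ⊗ₖ ρR) * Q' = (ρ * Q) ⊗ₖ ρR := by
    rw [hQ'def, ← Matrix.mul_kronecker_mul, Matrix.mul_one]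
  have hQ'σ : Q' * (ρ ⊗ₖ ρR) = (Q * ρ) ⊗ₖ ρR := by
    rw [hQ'def, ← Matrix.mul_kronecker_mul, Matrix.one_mul]
  have goal_eq : Matrix.trace (ρ *
      (Q * (XK - ptraceR (((1 : Matrix k k ℂ) ⊗ₖ ρR) *
                (Vᴴ * (XK' ⊗ₖ (1 : Matrix r' r' ℂ)) * V)) +
              ptraceR (((1 : Matrix k k ℂ) ⊗ₖ ρR) * Z)) -
         (XK - ptraceR (((1 : Matrix k k ℂ) ⊗ₖ ρR) *
                (Vᴴ * (XK' ⊗ₖ (1 : Matrix r' r' ℂ)) * V)) +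
              ptraceR (((1 : Matrix k k ℂ) ⊗ₖ ρR) * Z)) * Q)) =
      Matrix.trace ((ρ ⊗ₖ ρR) * (Q' * H - H * Q')) := by
    rw [hE, Matrix.mul_sub, Matrix.mul_sub, trace_sub, trace_sub]
    congr 1
    · rw [← Matrix.mul_assoc ρ Q, trace_mul_ptraceR (ρ * Q) ρR H,
        ← Matrix.mul_assoc (ρ ⊗ₖ ρR) Q' H, hσQ']
    · rw [← Matrix.mul_assoc ρ _ Q, trace_mul_comm _ Q, ← Matrix.mul_assoc Q ρ,
        trace_mul_ptraceR (Q * ρ) ρR H, ← Matrix.mul_assoc (ρ ⊗ₖ ρR) H Q',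
        trace_mul_comm _ Q', ← Matrix.mul_assoc Q' (ρ ⊗ₖ ρR) H, hQ'σ]
  -- variance bound
  have tvt : ∀ T : Matrix (k × r) (k × r) ℂ, Matrix.trace (V * T * Vᴴ) = Matrix.trace T := by
    intro T
    rw [trace_mul_comm (V * T) Vᴴ, ← Matrix.mul_assoc, hV1, Matrix.one_mul]
  have h1Q : (1 : Matrix (k × r) (k × r) ℂ) - Q' = (1 - Q) ⊗ₖ (1 : Matrix r r ℂ) := by
    rw [sub_kron, Matrix.one_kronecker_one, hQ'def]
  have hS1 : ((1 - Q) * ρ * (1 - Q)) ⊗ₖ ρR =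
      (1 - Q') * ((ρ ⊗ₖ ρR) * (1 - Q')) := by
    rw [h1Q, ← Matrix.mul_kronecker_mul, ← Matrix.mul_kronecker_mul]
    simp [Matrix.mul_assoc]
  have hS2 : (Q * ρ * Q) ⊗ₖ ρR = Q' * ((ρ ⊗ₖ ρR) * Q') := by
    rw [hQ'def, ← Matrix.mul_kronecker_mul, ← Matrix.mul_kronecker_mul]
    simp [Matrix.mul_assoc]
  have hε' : (Matrix.trace (N * ((1 - Q') * ((ρ ⊗ₖ ρR) * (1 - Q'))))).re +
      ((Matrix.trace (Q' * ((ρ ⊗ₖ ρR) * Q'))).re -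
        (Matrix.trace (N * (Q' * ((ρ ⊗ₖ ρR) * Q')))).re) = ε ^ 2 := by
    rw [← hε]
    congr 1
    · rw [hS1, tr_conj V G, ← hNdef]
    · rw [hS2, Matrix.sub_mul, Matrix.one_mul, trace_sub, Complex.sub_re,
        tr_conj V G, ← hNdef, tvt]
  have idC := trace_identity (ρ ⊗ₖ ρR) Q' N hQ'2
  have hNsub : N - N * N = Vᴴ * ((P - P * P) ⊗ₖ (1 : Matrix r' r' ℂ)) * V := by
    rw [hNdef, conj_sandwich V hV2, ← Matrix.sub_mul, ← Matrix.mul_sub, hGdef,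
      ← Matrix.mul_kronecker_mul, Matrix.mul_one, sub_kron]
  have hNNpsd : (N - N * N).PosSemidef := by
    rw [hNsub]
    exact (posSemidef_kron hP2 Matrix.PosSemidef.one).conjTranspose_mul_mul_same V
  have hnn : 0 ≤ (Matrix.trace ((ρ ⊗ₖ ρR) * (N - N * N))).re :=
    re_trace_mul_nonneg hσ hNNpsd
  have hvar : (Matrix.trace ((ρ ⊗ₖ ρR) * (D * D))).re ≤ ε ^ 2 := by
    have h := congrArg Complex.re idC
    rw [Complex.add_re, Complex.sub_re, Complex.add_re] at h
    rw [hDdef]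
    linarith [h, hε', hnn]
  have hsqv : Real.sqrt ((Matrix.trace ((ρ ⊗ₖ ρR) * (D * D))).re) ≤ ε := by
    calc Real.sqrt ((Matrix.trace ((ρ ⊗ₖ ρR) * (D * D))).re) ≤ Real.sqrt (ε ^ 2) :=
          Real.sqrt_le_sqrt hvar
      _ = ε := by rw [Real.sqrt_sq hεpos]
  -- SLD facts
  have hSLDR : IsSLD (ρ ⊗ₖ ρR) XRl ((1 : Matrix k k ℂ) ⊗ₖ LR) := by
    constructor
    · show _ᴴ = _
      rw [kron_conjT, Matrix.conjTranspose_one, hLR.1.eq]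
    · rw [hXRldef, ← Matrix.mul_kronecker_mul, ← Matrix.mul_kronecker_mul,
        ← Matrix.mul_kronecker_mul, ← Matrix.mul_kronecker_mul]
      simp only [Matrix.one_mul, Matrix.mul_one]
      rw [← kron_add, ← kron_sub, ← kron_smul, hLR.2]
  have hSLDH : IsSLD (ρ ⊗ₖ ρR) H (L1 + LZ) := by
    refine ⟨hL1.1.add hLZ.1, ?_⟩
    calc (L1 + LZ) * (ρ ⊗ₖ ρR) + (ρ ⊗ₖ ρR) * (L1 + LZ)
        = (L1 * (ρ ⊗ₖ ρR) + (ρ ⊗ₖ ρR) * L1) + (LZ * (ρ ⊗ₖ ρR) + (ρ ⊗ₖ ρR) * LZ) := by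
          noncomm_ring
      _ = ((-2 : ℂ) * Complex.I) • (W1 * (ρ ⊗ₖ ρR) - (ρ ⊗ₖ ρR) * W1) +
          ((-2 : ℂ) * Complex.I) • (Z * (ρ ⊗ₖ ρR) - (ρ ⊗ₖ ρR) * Z) := by
          rw [hL1.2, hLZ.2]
      _ = ((-2 : ℂ) * Complex.I) • (H * (ρ ⊗ₖ ρR) - (ρ ⊗ₖ ρR) * H) := by
          rw [← smul_add, hHdef]
          congr 1
          noncomm_ring
  have hFR : fisherVal (ρ ⊗ₖ ρR) ((1 : Matrix k k ℂ) ⊗ₖ LR) = fisherVal ρR LR := by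
    unfold fisherVal
    rw [← Matrix.mul_kronecker_mul, Matrix.one_mul, ← Matrix.mul_kronecker_mul, Matrix.mul_one,
      Matrix.trace_kronecker, hρ1, one_mul]
  have hsub : Real.sqrt (fisherVal (ρ ⊗ₖ ρR) (L1 + LZ)) ≤
      Real.sqrt (fisherVal (ρ ⊗ₖ ρR) L1) + Real.sqrt (fisherVal (ρ ⊗ₖ ρR) LZ) := by
    rw [sqrt_fisher_eq hσ _ (hL1.1.add hLZ.1), sqrt_fisher_eq hσ _ hL1.1,
      sqrt_fisher_eq hσ _ hLZ.1, Matrix.add_mul]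
    have hadd : toEuc (L1 * hσ.sqrt + LZ * hσ.sqrt) =
        toEuc (L1 * hσ.sqrt) + toEuc (LZ * hσ.sqrt) := rfl
    rw [hadd]
    exact norm_add_le _ _
  -- assemble
  rw [goal_eq, key, Matrix.mul_add, trace_add]
  have split : ‖(Matrix.trace ((ρ ⊗ₖ ρR) * (D * H - H * D)) +
      Matrix.trace ((ρ ⊗ₖ ρR) * (D * XRl - XRl * D)))‖ ≤
      ‖(Matrix.trace ((ρ ⊗ₖ ρR) * (D * H - H * D)))‖ +
      ‖(Matrix.trace ((ρ ⊗ₖ ρR) * (D * XRl - XRl * D)))‖ :=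
    norm_add_le _ _
  have flip : ∀ X Y : Matrix (k × r) (k × r) ℂ,
      ‖(Matrix.trace ((ρ ⊗ₖ ρR) * (X * Y - Y * X)))‖ =
      ‖(Matrix.trace ((ρ ⊗ₖ ρR) * (Y * X - X * Y)))‖ := by
    intro X Y
    rw [show X * Y - Y * X = -(Y * X - X * Y) from by abel, Matrix.mul_neg, trace_neg,
      norm_neg]
  have b1 : ‖(Matrix.trace ((ρ ⊗ₖ ρR) * (D * H - H * D)))‖ ≤
      (Real.sqrt (fisherVal (ρ ⊗ₖ ρR) L1) + Real.sqrt (fisherVal (ρ ⊗ₖ ρR) LZ)) *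
        Real.sqrt ((Matrix.trace ((ρ ⊗ₖ ρR) * (D * D))).re) := by
    rw [flip D H]
    calc ‖(Matrix.trace ((ρ ⊗ₖ ρR) * (H * D - D * H)))‖
        ≤ Real.sqrt (fisherVal (ρ ⊗ₖ ρR) (L1 + LZ)) *
          Real.sqrt ((Matrix.trace ((ρ ⊗ₖ ρR) * (D * D))).re) := ur hσ hSLDH hDh
      _ ≤ _ := by
          apply mul_le_mul_of_nonneg_right hsub (Real.sqrt_nonneg _)
  have b2 : ‖(Matrix.trace ((ρ ⊗ₖ ρR) * (D * XRl - XRl * D)))‖ ≤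
      Real.sqrt (fisherVal ρR LR) *
        Real.sqrt ((Matrix.trace ((ρ ⊗ₖ ρR) * (D * D))).re) := by
    rw [flip D XRl]
    calc ‖(Matrix.trace ((ρ ⊗ₖ ρR) * (XRl * D - D * XRl)))‖
        ≤ Real.sqrt (fisherVal (ρ ⊗ₖ ρR) ((1 : Matrix k k ℂ) ⊗ₖ LR)) *
          Real.sqrt ((Matrix.trace ((ρ ⊗ₖ ρR) * (D * D))).re) := ur hσ hSLDR hDh
      _ = _ := by rw [hFR]
  have hvnn : 0 ≤ Real.sqrt ((Matrix.trace ((ρ ⊗ₖ ρR) * (D * D))).re) := Real.sqrt_nonneg _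
  have hf1 : 0 ≤ Real.sqrt (fisherVal (ρ ⊗ₖ ρR) L1) := Real.sqrt_nonneg _
  have hf2 : 0 ≤ Real.sqrt (fisherVal (ρ ⊗ₖ ρR) LZ) := Real.sqrt_nonneg _
  have hf3 : 0 ≤ Real.sqrt (fisherVal ρR LR) := Real.sqrt_nonneg _
  nlinarith [split, b1, b2, hsqv, hvnn, hf1, hf2, hf3,
    mul_le_mul_of_nonneg_left hsqv (add_nonneg (add_nonneg hf1 hf2) hf3)]
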